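/- Let L be a right Leibniz algebra and let Bider(L) be the set of biderivations of L. Then Bider(L) is closed under the bracket [(d,D),(d',D')] = (d∘d' − d'∘d, D∘d' − d'∘D), and this bracket makes Bider(L) a (right) Leibniz algebra. -/
import Mathlib


variable {F : Type*} [Field F] {L : Type*} [AddCommGroup L] [Module F L]

/-- `d` is a derivation with respect to the bracket `br`. -/
def IsDer (br : L →ₗ[F] L →ₗ[F] L) (d : L →ₗ[F] L) : Prop :=
  ∀ x y : L, d (br x y) = br (d x) y + br x (d y)

/-- `D` is an anti-derivation with respect to the bracket `br`. -/
def IsAntiDer (br : L →ₗ[F] L →ₗ[F] L) (D : L →ₗ[F] L) : Prop :=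
  ∀ x y : L, D (br x y) = br (D x) y - br (D y) x

/-- `(d, D)` is a biderivation with respect to the bracket `br`. -/
def IsBider (br : L →ₗ[F] L →ₗ[F] L) (p : (L →ₗ[F] L) × (L →ₗ[F] L)) : Prop :=
  IsDer br p.1 ∧ IsAntiDer br p.2 ∧ ∀ x y : L, br x (p.1 y) = br x (p.2 y)

/-- The bracket on pairs: `[(d,D),(d',D')] = (d∘d' − d'∘d, D∘d' − d'∘D)`. -/
def biderBracket (p q : (L →ₗ[F] L) × (L →ₗ[F] L)) : (L →ₗ[F] L) × (L →ₗ[F] L) :=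
  (p.1 ∘ₗ q.1 - q.1 ∘ₗ p.1, p.2 ∘ₗ q.1 - q.1 ∘ₗ p.2)

/-- Bider(L) is closed under the bracket, and this bracket satisfies
the (right) Leibniz identity on biderivations. -/
theorem bider_is_leibniz_algebra
    (br : L →ₗ[F] L →ₗ[F] L)
    (hleib : ∀ x y z : L, br (br x y) z = br (br x z) y + br x (br y z)) :
    (∀ p q : (L →ₗ[F] L) × (L →ₗ[F] L), IsBider br p → IsBider br q →
      IsBider br (biderBracket p q)) ∧
    (∀ p q r : (L →ₗ[F] L) × (L →ₗ[F] L), IsBider br p → IsBider br q → IsBider br r →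
      biderBracket (biderBracket p q) r =
        biderBracket (biderBracket p r) q + biderBracket p (biderBracket q r)) := by
  constructor
  · rintro ⟨d, D⟩ ⟨d', D'⟩ ⟨hd, hD, hc⟩ ⟨hd', hD', hc'⟩
    simp only [IsDer, IsAntiDer] at hd hD hd' hD'
    simp only at hc hc'
    refine ⟨?_, ?_, ?_⟩
    · intro x y
      simp only [biderBracket, LinearMap.sub_apply, LinearMap.comp_apply,
        hd, hd', map_add, map_sub, LinearMap.add_apply]
      abel
    · intro x y
      simp only [biderBracket, LinearMap.sub_apply, LinearMap.comp_apply,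
        hd', hD, map_add, map_sub, LinearMap.add_apply]
      abel
    · intro x y
      have h1 : br x (d (d' y)) = br x (D (d' y)) := hc x (d' y)
      have h2 : br x (d' (d y)) = br x (d' (D y)) := by
        have e1 := hd' x (d y)
        have e2 := hd' x (D y)
        have e3 : br x (d y) = br x (D y) := hc x y
        have e4 : br (d' x) (d y) = br (d' x) (D y) := hc (d' x) y
        have e5 : br (d' x) (d y) + br x (d' (d y)) =
            br (d' x) (D y) + br x (d' (D y)) := by
          rw [← e1, ← e2, e3]
        rw [e4] at e5
        exact add_left_cancel e5
      simp only [biderBracket, LinearMap.sub_apply, LinearMap.comp_apply, map_sub,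
        h1, h2]
  · rintro p q r _ _ _
    have h1 : (biderBracket (biderBracket p q) r).1 =
        (biderBracket (biderBracket p r) q + biderBracket p (biderBracket q r)).1 := by
      ext x
      simp only [biderBracket, Prod.fst_add, LinearMap.add_apply, LinearMap.sub_apply,
        LinearMap.comp_apply, map_sub, map_add]
      abel
    have h2 : (biderBracket (biderBracket p q) r).2 =
        (biderBracket (biderBracket p r) q + biderBracket p (biderBracket q r)).2 := by
      ext x
      simp only [biderBracket, Prod.snd_add, Prod.fst_add, LinearMap.add_apply,
        LinearMap.sub_apply, LinearMap.comp_apply, map_sub, map_add]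
      abel
    exact Prod.ext h1 h2
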